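/- There exist absolute constants c, C > 0 (independent of N, r, λ) such that the following holds. Let r ≥ 2 be an integer, λ ∈ (0, 4^r), and let ρ, ρ̃ ∈ ℂ be two roots of p(x) = (1−x)^{2r} − (−1)^r λ x^r such that ρ̃ is none of ρ, the complex conjugate of ρ, ρ^{−1}, or the complex conjugate of ρ^{−1}. Then c r^{−2} λ^{1/(2r)} ≤ | |ρ̃| − |ρ| | ≤ C λ^{1/(2r)}. -/

import Mathlib

open Real

set_option linter.unusedVariables false

lemma my_sin_lower (r s : ℕ) (hr : 2 ≤ r) (hs1 : 1 ≤ s) (hs2 : s + 1 ≤ r) :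
    2 / (r:ℝ) ≤ Real.sin (π * s / r) := by
  have hrpos : (0:ℝ) < r := by positivity
  have hπ : (0:ℝ) < π := Real.pi_pos
  rcases le_or_gt (2*s) r with h | h
  · have h1 : (0:ℝ) ≤ π * s / r := by positivity
    have h2 : π * s / r ≤ π / 2 := by
      rw [div_le_div_iff₀ hrpos (by norm_num)]
      have : (2:ℝ) * s ≤ r := by exact_mod_cast h
      nlinarith
    have hj := Real.mul_le_sin h1 h2
    have hs1' : (1:ℝ) ≤ s := by exact_mod_cast hs1
    have he : 2/π * (π * (s:ℝ)/r) = 2*s/r := by field_simp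
    rw [he] at hj
    refine le_trans ?_ hj
    rw [div_le_div_iff₀ hrpos hrpos]
    nlinarith
  · have key : Real.sin (π * s / r) = Real.sin (π * (r - s : ℕ) / r) := by
      rw [← Real.sin_pi_sub]
      congr 1
      have hsr : ((r - s : ℕ) : ℝ) = (r:ℝ) - s := by
        have : s ≤ r := by omega
        push_cast [this]; ring
      rw [hsr]; field_simp
    rw [key]
    have h1' : (1:ℝ) ≤ ((r - s : ℕ):ℝ) := by
      have : 1 ≤ r - s := by omega
      exact_mod_cast this
    have h2' : (0:ℝ) ≤ π * (r - s : ℕ) / r := by positivity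
    have h3' : π * (r - s:ℕ) / r ≤ π / 2 := by
      rw [div_le_div_iff₀ hrpos (by norm_num)]
      have : (2:ℝ) * (r - s : ℕ) ≤ r := by
        have : 2 * (r - s) ≤ r := by omega
        exact_mod_cast this
      nlinarith
    have hj := Real.mul_le_sin h2' h3'
    have he : 2/π * (π * ((r - s:ℕ):ℝ)/r) = 2*((r-s:ℕ):ℝ)/r := by field_simp
    rw [he] at hj
    refine le_trans ?_ hj
    rw [div_le_div_iff₀ hrpos hrpos]
    nlinarith

lemma my_gap_aux (r a b : ℕ) (hr : 2 ≤ r) (hab : a < b) (hb : 2*b ≤ r) :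
    8/(r:ℝ)^2 ≤ Real.cos (2*π*a/r) - Real.cos (2*π*b/r) := by
  have hrpos : (0:ℝ) < r := by positivity
  have key : Real.cos (2*π*a/r) - Real.cos (2*π*b/r)
      = 2 * Real.sin (π * (a+b:ℕ) / r) * Real.sin (π * (b-a:ℕ) / r) := by
    rw [Real.cos_sub_cos]
    have h1 : (2*π*(a:ℝ)/r + 2*π*b/r)/2 = π * ((a+b:ℕ):ℝ) / r := by push_cast; ring
    have h2 : (2*π*(a:ℝ)/r - 2*π*b/r)/2 = -(π * ((b-a:ℕ):ℝ) / r) := by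
      have : ((b - a : ℕ):ℝ) = (b:ℝ) - a := by
        have : a ≤ b := hab.le
        push_cast [this]; ring
      rw [this]; ring
    rw [h1, h2, Real.sin_neg]; ring
  rw [key]
  have s1 := my_sin_lower r (a+b) hr (by omega) (by omega)
  have s2 := my_sin_lower r (b-a) hr (by omega) (by omega)
  have p1 : (0:ℝ) < 2/(r:ℝ) := by positivity
  calc 8/(r:ℝ)^2 = 2 * (2/(r:ℝ)) * (2/(r:ℝ)) := by field_simp; ring
    _ ≤ _ := by
        have := le_trans p1.le s1
        have := le_trans p1.le s2
        nlinarith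

lemma my_cos_fold (r j : ℕ) (hj : j ≤ r) :
    Real.cos (2*π*((r-j:ℕ):ℝ)/r) = Real.cos (2*π*j/r) := by
  rcases Nat.eq_zero_or_pos r with rfl | hr
  · interval_cases j; simp
  have hrpos : (0:ℝ) < r := by positivity
  have : ((r - j : ℕ):ℝ) = (r:ℝ) - j := by push_cast [hj]; ring
  rw [this]
  have harg : 2*π*((r:ℝ) - j)/r = 2*π - 2*π*j/r := by field_simp
  rw [harg, Real.cos_sub, Real.cos_two_pi, Real.sin_two_pi]
  ring

lemma my_cos_gap (r j k : ℕ) (hr : 2 ≤ r) (hj : j < r) (hk : k < r)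
    (hne : Real.cos (2*π*j/r) ≠ Real.cos (2*π*k/r)) :
    8/(r:ℝ)^2 ≤ |Real.cos (2*π*j/r) - Real.cos (2*π*k/r)| := by
  -- fold
  obtain ⟨j', hj'le, hj'⟩ : ∃ j', 2*j' ≤ r ∧ Real.cos (2*π*j/r) = Real.cos (2*π*j'/r) := by
    rcases le_or_gt (2*j) r with h | h
    · exact ⟨j, h, rfl⟩
    · exact ⟨r - j, by omega, (my_cos_fold r j hj.le).symm⟩
  obtain ⟨k', hk'le, hk'⟩ : ∃ k', 2*k' ≤ r ∧ Real.cos (2*π*k/r) = Real.cos (2*π*k'/r) := by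
    rcases le_or_gt (2*k) r with h | h
    · exact ⟨k, h, rfl⟩
    · exact ⟨r - k, by omega, (my_cos_fold r k hk.le).symm⟩
  rw [hj', hk'] at hne ⊢
  have hp : (0:ℝ) < 8/(r:ℝ)^2 := by positivity
  rcases lt_trichotomy j' k' with h | h | h
  · have := my_gap_aux r j' k' hr h hk'le
    rw [abs_of_nonneg (by linarith)] ; linarith
  · exact absurd (by rw [h]) hne
  · have := my_gap_aux r k' j' hr h hj'le
    rw [abs_of_nonpos (by linarith)]; linarith

lemma my_sq_le (a b : ℝ) (hb : 0 ≤ b) (h : a^2 ≤ b^2) : a ≤ b := by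
  nlinarith [sq_nonneg (a - b), sq_nonneg (a + b)]

lemma my_side (m c D x : ℝ) (hm : 0 < m) (hc1 : c ≤ 1) (hcm : -1 ≤ c)
    (hD : 0 ≤ D) (hD2 : D^2 = 16 - 8*m*c + m^2) (hx : 0 < x)
    (hxe : 2*(1+x^2) = (D+m)*x) :
    x + x⁻¹ = (D+m)/2 ∧ |x - x⁻¹| = Real.sqrt (m*(D+m-4*c)/2) ∧
      4 - m*c ≤ D ∧ D ≤ 4 + m := by
  have hxinv : x⁻¹ = (D+m)/2 - x := by
    field_simp
    nlinarith [hxe]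
  have hDge : 4 - m*c ≤ D := by
    apply my_sq_le _ _ hD
    nlinarith [mul_nonneg (mul_nonneg hm.le hm.le) (mul_nonneg (by linarith : (0:ℝ) ≤ 1 - c) (by linarith : (0:ℝ) ≤ 1 + c))]
  have hDle : D ≤ 4 + m := by
    apply my_sq_le _ _ (by linarith)
    nlinarith [mul_nonneg hm.le (by linarith : (0:ℝ) ≤ 1 + c)]
  refine ⟨by rw [hxinv]; ring, ?_, hDge, hDle⟩
  have hsq : (x - x⁻¹)^2 = m*(D+m-4*c)/2 := by
    rw [hxinv]
    nlinarith [hxe, hD2]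
  rw [← hsq, Real.sqrt_sq_eq_abs]

lemma my_G_facts (m c D : ℝ) (hm : 0 < m) (hm4 : m < 4) (hc1 : c ≤ 1) (hcm : -1 ≤ c)
    (hDge : 4 - m*c ≤ D) (hDle : D ≤ 4 + m) :
    0 ≤ m*(D+m-4*c)/2 ∧ m*(D+m-4*c)/2 ≤ 9*m ∧ 2*m*(1-c) ≤ m*(D+m-4*c)/2 := by
  have e1 : m*(4 - m*c) ≤ m*D := mul_le_mul_of_nonneg_left hDge hm.le
  have e2 : m*D ≤ m*(4+m) := mul_le_mul_of_nonneg_left hDle hm.le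
  have e3 : m*(-c) ≤ m*1 := mul_le_mul_of_nonneg_left (by linarith) hm.le
  have e4 : m*c ≤ m*1 := mul_le_mul_of_nonneg_left hc1 hm.le
  have e5 : m*(m*c) ≤ m*(m*1) := mul_le_mul_of_nonneg_left e4 hm.le
  constructor
  · nlinarith [e1, e5]
  constructor
  · nlinarith [e2, e3]
  · nlinarith [e1, e5]

lemma my_sqrt_ub (m X : ℝ) (hm : 0 ≤ m) (hX0 : 0 ≤ X) (hX : X ≤ 9*m) :
    Real.sqrt X ≤ 3*Real.sqrt m := by
  have h9 : (9:ℝ)*m = (3*Real.sqrt m)^2 := by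
    have := Real.sq_sqrt hm
    nlinarith [this]
  calc Real.sqrt X ≤ Real.sqrt (9*m) := Real.sqrt_le_sqrt hX
    _ = 3*Real.sqrt m := by rw [h9, Real.sqrt_sq (by positivity)]

lemma my_sqrt_lb (m c X : ℝ) (hm : 0 ≤ m) (hc1 : c ≤ 1) (hcm : -1 ≤ c)
    (h : 2*m*(1-c) ≤ X) : Real.sqrt m * (1-c) ≤ Real.sqrt X := by
  have ht : (Real.sqrt m * (1-c))^2 ≤ X := by
    have hs2 : (Real.sqrt m * (1-c))^2 = m*(1-c)^2 := by
      rw [mul_pow, Real.sq_sqrt hm]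
    nlinarith [hs2, mul_nonneg hm (mul_nonneg (by linarith : (0:ℝ) ≤ 1-c) (by linarith : (0:ℝ) ≤ 1+c))]
  calc Real.sqrt m * (1-c) ≤ Real.sqrt ((Real.sqrt m * (1-c))^2) := by
        rw [Real.sqrt_sq (mul_nonneg (Real.sqrt_nonneg m) (by linarith))]
    _ ≤ Real.sqrt X := Real.sqrt_le_sqrt ht
  
lemma my_Gdiff (s δ G G' : ℝ) (hs : 0 < s) (hδ : 0 < δ) (hG : 0 ≤ G) (hG' : 0 ≤ G')
    (hle : G ≤ 3*s) (hle' : G' ≤ 3*s) (h : 2*(s^2)*δ ≤ G'^2 - G^2) : s*δ/3 ≤ G' - G := by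
  have hGG : G ≤ G' := by nlinarith
  have h2 : (G'-G)*(G'+G) ≤ (G'-G)*(6*s) := mul_le_mul_of_nonneg_left (by linarith) (by linarith)
  nlinarith [h, h2]

lemma my_inv_ge (x : ℝ) (hx : 0 < x) (h : x⁻¹ ≤ 6) : (1:ℝ)/6 ≤ x := by
  have := mul_inv_cancel₀ hx.ne'
  rw [div_le_iff₀ (by norm_num : (0:ℝ) < 6)]
  nlinarith [this]

lemma my_sub_inv_sign (x : ℝ) (hx : 0 < x) :
    (1 ≤ x → 0 ≤ x - x⁻¹) ∧ (x ≤ 1 → x - x⁻¹ ≤ 0) := by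
  constructor
  · intro h
    have : x⁻¹ ≤ 1 := by
      rw [inv_le_one_iff₀]; right; exact h
    linarith
  · intro h
    have : 1 ≤ x⁻¹ := one_le_inv_iff₀.mpr ⟨hx, h⟩
    linarith

lemma my_Dmono (m c c' D D' : ℝ) (hm : 0 < m) (hcc : c' < c)
    (hD : 0 ≤ D) (hD2 : D^2 = 16 - 8*m*c + m^2)
    (hD' : 0 ≤ D') (hD2' : D'^2 = 16 - 8*m*c' + m^2) : D ≤ D' := by
  have hmc : m*c' ≤ m*c := mul_le_mul_of_nonneg_left hcc.le hm.le
  apply my_sq_le _ _ hD'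
  nlinarith [hD2, hD2', hmc]

lemma my_F2 (m c D : ℝ) (hm : 0 < m) (hc1 : c ≤ 1) (hDge : 4 - m*c ≤ D) :
    2 ≤ (D+m)/2 := by
  have := mul_le_mul_of_nonneg_left hc1 hm.le
  linarith

set_option maxHeartbeats 1000000 in
lemma my_core_lower (m c c' D D' x y : ℝ)
    (hm : 0 < m) (hm4 : m < 4)
    (hc1 : c ≤ 1) (hcm : -1 ≤ c) (hc1' : c' ≤ 1) (hcm' : -1 ≤ c')
    (hcc : c' < c)
    (hD : 0 ≤ D) (hD2 : D^2 = 16 - 8*m*c + m^2)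
    (hD' : 0 ≤ D') (hD2' : D'^2 = 16 - 8*m*c' + m^2)
    (hx : 0 < x) (hy : 0 < y)
    (hxe : 2*(1+x^2) = (D+m)*x) (hye : 2*(1+y^2) = (D'+m)*y) :
    Real.sqrt m * (c - c') / 216 ≤ |y - x| := by
  obtain ⟨hxF, hxG, hDge, hDle⟩ := my_side m c D x hm hc1 hcm hD hD2 hx hxe
  obtain ⟨hyF, hyG, hDge', hDle'⟩ := my_side m c' D' y hm hc1' hcm' hD' hD2' hy hye
  obtain ⟨hg0, hg9, hg2⟩ := my_G_facts m c D hm hm4 hc1 hcm hDge hDle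
  obtain ⟨hg0', hg9', hg2'⟩ := my_G_facts m c' D' hm hm4 hc1' hcm' hDge' hDle'
  set s := Real.sqrt m with hs
  have hs2 : s^2 = m := Real.sq_sqrt hm.le
  have hspos : 0 < s := Real.sqrt_pos.mpr hm
  set G := Real.sqrt (m*(D+m-4*c)/2) with hG
  set G' := Real.sqrt (m*(D'+m-4*c')/2) with hG'
  have hGnn : 0 ≤ G := Real.sqrt_nonneg _
  have hG'nn : 0 ≤ G' := Real.sqrt_nonneg _
  have hG2 : G^2 = m*(D+m-4*c)/2 := Real.sq_sqrt hg0
  have hG'2 : G'^2 = m*(D'+m-4*c')/2 := Real.sq_sqrt hg0'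
  have hGle : G ≤ 3*s := my_sqrt_ub m _ hm.le hg0 hg9
  have hG'le : G' ≤ 3*s := my_sqrt_ub m _ hm.le hg0' hg9'
  -- monotonicity facts
  have hmc : m*c' ≤ m*c := mul_le_mul_of_nonneg_left hcc.le hm.le
  have hDD : D ≤ D' := my_Dmono m c c' D D' hm hcc hD hD2 hD' hD2'
  have hmDD : m*D ≤ m*D' := mul_le_mul_of_nonneg_left hDD hm.le
  have hGsq : 2*(s^2)*(c-c') ≤ G'^2 - G^2 := by
    rw [hs2]; rw [hG2, hG'2]; linarith [hmDD, hmc]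
  have hGdiff : s*(c-c')/3 ≤ G' - G :=
    my_Gdiff s (c-c') G G' hspos (by linarith) hGnn hG'nn hGle hG'le hGsq
  -- G' lower bound
  have hG'lb : s*(1-c') ≤ G' := my_sqrt_lb m c' _ hm.le hc1' hcm' hg2'
  have hδ1c : s*(c-c') ≤ s*(1-c') := mul_le_mul_of_nonneg_left (by linarith) hspos.le
  have hG'ge : s*(c-c') ≤ G' := le_trans hδ1c hG'lb
  -- F bounds
  have hF6 : (D+m)/2 ≤ 6 := by linarith
  have hF6' : (D'+m)/2 ≤ 6 := by linarith
  have hF2 : 2 ≤ (D+m)/2 := my_F2 m c D hm hc1 hDge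
  have hF2' : 2 ≤ (D'+m)/2 := my_F2 m c' D' hm hc1' hDge'
  have hxipos : 0 < x⁻¹ := inv_pos.mpr hx
  have hyipos : 0 < y⁻¹ := inv_pos.mpr hy
  have hxi6 : x⁻¹ ≤ 6 := by linarith
  have hyi6 : y⁻¹ ≤ 6 := by linarith
  have hx6 : (1:ℝ)/6 ≤ x := my_inv_ge x hx hxi6
  have hy6 : (1:ℝ)/6 ≤ y := my_inv_ge y hy hyi6
  have hsδ : 0 < s*(c-c') := mul_pos hspos (by linarith)
  have hxsign := my_sub_inv_sign x hx
  have hysign := my_sub_inv_sign y hy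
  have hFF : (D+m)/2 ≤ (D'+m)/2 := by linarith
  rcases le_or_gt 1 x with hx1 | hx1 <;> rcases le_or_gt 1 y with hy1 | hy1
  · -- x ≥ 1, y ≥ 1
    have hxg : x - x⁻¹ = G := by linarith [abs_of_nonneg (hxsign.1 hx1), hxG]
    have hyg : y - y⁻¹ = G' := by linarith [abs_of_nonneg (hysign.1 hy1), hyG]
    rw [abs_of_nonneg (by linarith)]
    linarith
  · -- x ≥ 1 > y
    have hyg : y - y⁻¹ = -G' := by linarith [abs_of_nonpos (hysign.2 hy1.le), hyG]
    -- y⁻¹ - 1 ≥ G'/2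
    have h1 : G'/2 ≤ y⁻¹ - 1 := by linarith
    have h3 : s*(c-c')/12 ≤ 1 - y := by
      have h2y : y*y⁻¹ = 1 := mul_inv_cancel₀ hy.ne'
      have hee : 1 - y = (y⁻¹ - 1) * y := by linear_combination -h2y
      rw [hee]
      calc s*(c-c')/12 = (s*(c-c')/2) * (1/6) := by ring
        _ ≤ (y⁻¹ - 1) * y := mul_le_mul (by linarith) hy6 (by norm_num) (by linarith)
    rw [abs_of_nonpos (by linarith)]
    linarith
  · -- y ≥ 1 > x
    have hyg : y - y⁻¹ = G' := by linarith [abs_of_nonneg (hysign.1 hy1), hyG]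
    have h1 : G'/2 ≤ y - 1 := by linarith
    rw [abs_of_nonneg (by linarith)]
    linarith
  · -- x < 1, y < 1
    have hxg : x - x⁻¹ = -G := by linarith [abs_of_nonpos (hxsign.2 hx1.le), hxG]
    have hyg : y - y⁻¹ = -G' := by linarith [abs_of_nonpos (hysign.2 hy1.le), hyG]
    have hinvdiff : s*(c-c')/6 ≤ y⁻¹ - x⁻¹ := by linarith
    have hxy : x - y = (y⁻¹ - x⁻¹) * (x*y) := by
      have h1x : x*x⁻¹ = 1 := mul_inv_cancel₀ hx.ne'
      have h2y : y*y⁻¹ = 1 := mul_inv_cancel₀ hy.ne'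
      linear_combination y*h1x - x*h2y
    have hxy36 : (1:ℝ)/36 ≤ x*y := by
      calc (1:ℝ)/36 = (1/6)*(1/6) := by norm_num
        _ ≤ x*y := mul_le_mul hx6 hy6 (by norm_num) (by linarith)
    have : s*(c-c')/216 ≤ x - y := by
      rw [hxy]
      calc s*(c-c')/216 = (s*(c-c')/6) * (1/36) := by ring
        _ ≤ (y⁻¹ - x⁻¹) * (x*y) := mul_le_mul hinvdiff hxy36 (by norm_num) (by linarith)
    rw [abs_of_nonpos (by linarith)]
    linarith

lemma my_core_upper (m c D x : ℝ) (hm : 0 < m) (hm4 : m < 4)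
    (hc1 : c ≤ 1) (hcm : -1 ≤ c)
    (hD : 0 ≤ D) (hD2 : D^2 = 16 - 8*m*c + m^2)
    (hx : 0 < x) (hxe : 2*(1+x^2) = (D+m)*x) :
    |x - 1| ≤ 3*Real.sqrt m := by
  obtain ⟨hxF, hxG, hDge, hDle⟩ := my_side m c D x hm hc1 hcm hD hD2 hx hxe
  obtain ⟨hg0, hg9, hg2⟩ := my_G_facts m c D hm hm4 hc1 hcm hDge hDle
  have hGle : Real.sqrt (m*(D+m-4*c)/2) ≤ 3*Real.sqrt m := my_sqrt_ub m _ hm.le hg0 hg9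
  have hsign := my_sub_inv_sign x hx
  rcases le_or_gt 1 x with h1 | h1
  · have hxi : x⁻¹ ≤ 1 := by rw [inv_le_one_iff₀]; right; exact h1
    have := abs_of_nonneg (hsign.1 h1)
    rw [abs_of_nonneg (by linarith)]
    linarith [hxG]
  · have hxi : 1 ≤ x⁻¹ := one_le_inv_iff₀.mpr ⟨hx, h1.le⟩
    have := abs_of_nonpos (hsign.2 h1.le)
    rw [abs_of_nonpos (by linarith)]
    linarith [hxG]

set_option maxHeartbeats 1000000 in
lemma my_root_analysis (r : ℕ) (hr : 2 ≤ r) (lam : ℝ) (hl : 0 < lam) (hl4 : lam < 4^r)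
    (ρ : ℂ) (hroot : (1 - ρ) ^ (2*r) - (-1)^r * (lam:ℂ) * ρ^r = 0) :
    ∃ (w : ℂ) (k : ℕ), k < r ∧ ρ ≠ 0 ∧ ρ * w = (1-ρ)^2 ∧
      ‖w‖ = lam ^ ((r:ℝ)⁻¹) ∧
      w.re = -(lam ^ ((r:ℝ)⁻¹)) * Real.cos (2*π*k/r) ∧
      2*(1 + (‖ρ‖)^2) = (‖4+w‖ + lam ^ ((r:ℝ)⁻¹)) * ‖ρ‖ ∧
      (‖4+w‖)^2
        = 16 - 8*(lam^((r:ℝ)⁻¹))*Real.cos (2*π*k/r) + (lam^((r:ℝ)⁻¹))^2 := by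
  have hr0 : r ≠ 0 := by omega
  set m : ℝ := lam ^ ((r:ℝ)⁻¹) with hm
  have hmpos : 0 < m := Real.rpow_pos_of_pos hl _
  have hmr : m ^ r = lam := Real.rpow_inv_natCast_pow hl.le hr0
  have hρ0 : ρ ≠ 0 := by
    intro h
    rw [h] at hroot
    simp [zero_pow hr0] at hroot
  obtain ⟨w, hw⟩ : ∃ w, ρ * w = (1-ρ)^2 := ⟨ρ⁻¹ * (1-ρ)^2, by field_simp⟩
  have hwr : (-w)^r = (lam:ℂ) := by
    have h1 : (ρ*w)^r = (1-ρ)^(2*r) := by rw [hw, ← pow_mul, mul_comm 2 r, pow_mul]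
    have h2 : (1-ρ)^(2*r) = (-1)^r * (lam:ℂ) * ρ^r := by linear_combination hroot
    have h3 : ρ^r * w^r = (-1)^r * (lam:ℂ) * ρ^r := by rw [← mul_pow, h1, h2]
    have h4 : w^r = (-1)^r * (lam:ℂ) :=
      mul_right_cancel₀ (pow_ne_zero r hρ0) (by linear_combination h3)
    have h5 : ((-1:ℂ))^r * ((-1:ℂ))^r = 1 := by rw [← mul_pow]; norm_num
    rw [neg_pow, h4]
    linear_combination (lam:ℂ) * h5
  have habsw : ‖w‖ = m := by
    have h1 : (‖w‖)^r = lam := by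
      have := congrArg (‖·‖) hwr
      rwa [norm_pow, norm_neg, Complex.norm_real, Real.norm_eq_abs, abs_of_pos hl] at this
    calc ‖w‖ = ((‖w‖)^r)^((r:ℝ)⁻¹) :=
          (Real.pow_rpow_inv_natCast (norm_nonneg w) hr0).symm
      _ = m := by rw [h1]
  have hm0 : (m:ℂ) ≠ 0 := by exact_mod_cast hmpos.ne'
  obtain ⟨ω, hωw⟩ : ∃ ω : ℂ, w = -(m:ℂ)*ω := ⟨-w/(m:ℂ), by field_simp⟩
  have hmrC : ((m:ℝ):ℂ)^r = (lam:ℂ) := by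
    rw [show ((m:ℝ):ℂ)^r = ((m^r : ℝ):ℂ) by push_cast; ring, hmr]
  have hlam0 : (lam:ℂ) ≠ 0 := by exact_mod_cast hl.ne'
  have hων : ω ^ r = 1 := by
    have h6 : -w = (m:ℂ)*ω := by rw [hωw]; ring
    have h7 : ((m:ℂ)*ω)^r = (lam:ℂ) := by rw [← h6, hwr]
    rw [mul_pow, hmrC] at h7
    field_simp at h7
    exact h7
  haveI : NeZero r := ⟨hr0⟩
  obtain ⟨k, hk, hζ⟩ := (Complex.isPrimitiveRoot_exp r hr0).eq_pow_of_pow_eq_one hων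
  have hωre : ω.re = Real.cos (2*π*k/r) := by
    rw [← hζ, ← Complex.exp_nat_mul]
    rw [show (k:ℂ) * (2*π*Complex.I/r) = ((2*π*k/r : ℝ):ℂ) * Complex.I by
      push_cast
      ring]
    exact Complex.exp_ofReal_mul_I_re _
  have hwre : w.re = -m * Real.cos (2*π*k/r) := by
    rw [hωw, ← hωre]
    simp [Complex.mul_re]
  refine ⟨w, k, hk, hρ0, hw, habsw, hwre, ?_, ?_⟩
  · have habs1 : (‖1-ρ‖)^2 = m * ‖ρ‖ := by
      have h8 := congrArg (‖·‖) hw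
      rw [norm_mul, norm_pow, habsw] at h8
      linear_combination -h8
    have habs2 : (‖1+ρ‖)^2 = ‖4+w‖ * ‖ρ‖ := by
      have he : (1+ρ)^2 = (4+w)*ρ := by linear_combination -hw
      have h9 := congrArg (‖·‖) he
      rw [norm_mul, norm_pow] at h9
      rw [h9]
    have hpar : (‖1+ρ‖)^2 + (‖1-ρ‖)^2 = 2 + 2*(‖ρ‖)^2 := by
      rw [Complex.sq_norm, Complex.sq_norm, Complex.sq_norm, Complex.normSq_apply,
        Complex.normSq_apply, Complex.normSq_apply]
      simp only [Complex.add_re, Complex.add_im, Complex.sub_re, Complex.sub_im,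
        Complex.one_re, Complex.one_im]
      ring
    linarith
  · have hnsq : w.re^2 + w.im^2 = m^2 := by
      have h := Complex.sq_norm w
      rw [Complex.normSq_apply, habsw] at h
      linear_combination -h
    have h48 : (‖4+w‖)^2 = (4 + w.re)^2 + w.im^2 := by
      rw [Complex.sq_norm, Complex.normSq_apply]
      simp only [Complex.add_re, Complex.add_im]
      norm_num
      ring
    rw [h48]
    linear_combination hnsq + 8*hwre

lemma my_conj_or (u v : ℂ) (hre : v.re = u.re) (habs : ‖v‖ = ‖u‖) :
    v = u ∨ v = starRingEnd ℂ u := by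
  have h0 : Complex.normSq v = Complex.normSq u := by
    rw [← Complex.sq_norm, ← Complex.sq_norm, habs]
  rw [Complex.normSq_apply, Complex.normSq_apply] at h0
  have h1 : (v.im - u.im) * (v.im + u.im) = 0 := by
    linear_combination h0 - (v.re + u.re)*hre
  rcases mul_eq_zero.mp h1 with h | h
  · left; exact Complex.ext hre (by linarith)
  · right
    refine Complex.ext ?_ ?_
    · rw [Complex.conj_re]; exact hre
    · rw [Complex.conj_im]; linarith

lemma my_distinct (ρ ρt w wt : ℂ) (hρ0 : ρ ≠ 0)
    (hw : ρ * w = (1-ρ)^2) (hwt : ρt * wt = (1-ρt)^2)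
    (habs : ‖wt‖ = ‖w‖)
    (hne1 : ρt ≠ ρ) (hne2 : ρt ≠ (starRingEnd ℂ) ρ)
    (hne3 : ρt ≠ ρ⁻¹) (hne4 : ρt ≠ (starRingEnd ℂ) (ρ⁻¹)) :
    wt.re ≠ w.re := by
  intro hre
  have eqρ : ρ^2 - (2+w)*ρ + 1 = 0 := by linear_combination -hw
  have eqt : ρt^2 - (2+wt)*ρt + 1 = 0 := by linear_combination -hwt
  rcases my_conj_or w wt hre habs with h | h
  · rw [h] at eqt
    have hfact : (ρt - ρ)*(ρ*ρt - 1) = 0 := by linear_combination ρ*eqt - ρt*eqρ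
    rcases mul_eq_zero.mp hfact with h2 | h2
    · exact hne1 (by linear_combination h2)
    · refine hne3 ?_
      field_simp
      linear_combination h2
  · -- wt = conj w
    have eqc : (starRingEnd ℂ ρ)^2 - (2 + starRingEnd ℂ w)*(starRingEnd ℂ ρ) + 1 = 0 := by
      have := congrArg (starRingEnd ℂ) eqρ
      simpa [map_add, map_sub, map_mul, map_pow, map_ofNat] using this
    rw [h] at eqt
    have hfact : (ρt - starRingEnd ℂ ρ)*((starRingEnd ℂ ρ)*ρt - 1) = 0 := by
      linear_combination (starRingEnd ℂ ρ)*eqt - ρt*eqc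
    rcases mul_eq_zero.mp hfact with h2 | h2
    · exact hne2 (by linear_combination h2)
    · refine hne4 ?_
      have hc0 : (starRingEnd ℂ) ρ ≠ 0 := by
        simpa using hρ0
      rw [map_inv₀]
      field_simp
      linear_combination h2

set_option maxHeartbeats 1000000 in
/-- There exist absolute constants `c, C > 0` such that for any `r ≥ 2`, `λ ∈ (0, 4^r)`, and
roots `ρ, ρ̃` of `p(x) = (1-x)^{2r} - (-1)^r λ x^r` with `ρ̃` none of `ρ`, `conj ρ`, `ρ⁻¹`,
`conj (ρ⁻¹)`, one has `c r⁻² λ^{1/(2r)} ≤ ||ρ̃| - |ρ|| ≤ C λ^{1/(2r)}`. -/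
theorem root_modulus_gap_bounds :
    ∃ c C : ℝ, 0 < c ∧ 0 < C ∧
      ∀ (r : ℕ), 2 ≤ r → ∀ (lam : ℝ), 0 < lam → lam < 4 ^ r →
        ∀ ρ ρt : ℂ,
          (1 - ρ) ^ (2 * r) - (-1) ^ r * (lam : ℂ) * ρ ^ r = 0 →
          (1 - ρt) ^ (2 * r) - (-1) ^ r * (lam : ℂ) * ρt ^ r = 0 →
          ρt ≠ ρ → ρt ≠ (starRingEnd ℂ) ρ → ρt ≠ ρ⁻¹ → ρt ≠ (starRingEnd ℂ) (ρ⁻¹) →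
          c * ((r : ℝ) ^ 2)⁻¹ * lam ^ ((2 * (r : ℝ))⁻¹) ≤
              |‖ρt‖ - ‖ρ‖| ∧
            |‖ρt‖ - ‖ρ‖| ≤ C * lam ^ ((2 * (r : ℝ))⁻¹) := by
  refine ⟨1/27, 6, by norm_num, by norm_num, ?_⟩
  intro r hr lam hl hl4 ρ ρt hroot hroott hne1 hne2 hne3 hne4
  have hr0 : r ≠ 0 := by omega
  have hrR : (0:ℝ) < r := by positivity
  set m : ℝ := lam ^ ((r:ℝ)⁻¹) with hm
  have hmpos : 0 < m := Real.rpow_pos_of_pos hl _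
  have hm4 : m < 4 := by
    have h1 : lam ^ ((r:ℝ)⁻¹) < ((4:ℝ)^r) ^ ((r:ℝ)⁻¹) :=
      Real.rpow_lt_rpow hl.le hl4 (by positivity)
    rwa [Real.pow_rpow_inv_natCast (by norm_num : (0:ℝ) ≤ 4) hr0] at h1
  -- sqrt m = lam ^ (2r)⁻¹
  have hsqrt : Real.sqrt m = lam ^ ((2*(r:ℝ))⁻¹) := by
    rw [hm, Real.sqrt_eq_rpow, ← Real.rpow_mul hl.le]
    congr 1
    rw [mul_inv]
    ring
  obtain ⟨w, k, hk, hρ0, hw, habsw, hwre, heq, hD2⟩ :=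
    my_root_analysis r hr lam hl hl4 ρ hroot
  obtain ⟨wt, j, hj, hρt0, hwt, habswt, hwret, heqt, hD2t⟩ :=
    my_root_analysis r hr lam hl hl4 ρt hroott
  set x : ℝ := ‖ρ‖ with hx
  set y : ℝ := ‖ρt‖ with hy
  have hxpos : 0 < x := by
    rw [hx]; exact (norm_pos_iff.mpr hρ0)
  have hypos : 0 < y := by
    rw [hy]; exact (norm_pos_iff.mpr hρt0)
  set ck : ℝ := Real.cos (2*π*k/r) with hck
  set cj : ℝ := Real.cos (2*π*j/r) with hcj
  have hck1 : ck ≤ 1 := Real.cos_le_one _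
  have hckm : -1 ≤ ck := Real.neg_one_le_cos _
  have hcj1 : cj ≤ 1 := Real.cos_le_one _
  have hcjm : -1 ≤ cj := Real.neg_one_le_cos _
  set D : ℝ := ‖4+w‖ with hD
  set Dt : ℝ := ‖4+wt‖ with hDt
  have hDnn : 0 ≤ D := norm_nonneg _
  have hDtnn : 0 ≤ Dt := norm_nonneg _
  have hxe : 2*(1+x^2) = (D+m)*x := heq
  have hye : 2*(1+y^2) = (Dt+m)*y := heqt
  -- cos values distinct
  have hwrene : wt.re ≠ w.re :=
    my_distinct ρ ρt w wt hρ0 hw hwt (by rw [habswt, habsw]) hne1 hne2 hne3 hne4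
  have hcne : cj ≠ ck := by
    intro hEq
    apply hwrene
    rw [hwret, hwre, hEq]
  have hgap : 8/(r:ℝ)^2 ≤ |cj - ck| := my_cos_gap r j k hr hj hk hcne
  constructor
  · -- lower bound
    have key : Real.sqrt m * |cj - ck| / 216 ≤ |y - x| := by
      rcases lt_or_gt_of_ne hcne with hlt | hlt
      · have := my_core_lower m ck cj D Dt x y hmpos hm4 hck1 hckm hcj1 hcjm hlt
          hDnn hD2 hDtnn hD2t hxpos hypos hxe hye
        rw [abs_of_nonpos (by linarith)]
        linarith [this]
      · have := my_core_lower m cj ck Dt D y x hmpos hm4 hcj1 hcjm hck1 hckm hlt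
          hDtnn hD2t hDnn hD2 hypos hxpos hye hxe
        rw [abs_of_pos (by linarith), abs_sub_comm]
        linarith [this]

    have h2 : Real.sqrt m * (8/(r:ℝ)^2) / 216 ≤ Real.sqrt m * |cj - ck| / 216 := by
      have := Real.sqrt_nonneg m
      gcongr
    have h3 : (1:ℝ)/27 * ((r:ℝ)^2)⁻¹ * lam ^ ((2*(r:ℝ))⁻¹)
        = Real.sqrt m * (8/(r:ℝ)^2) / 216 := by
      rw [hsqrt]
      field_simp
      ring
    rw [h3]
    exact le_trans h2 key
  · -- upper bound
    have hu1 : |x - 1| ≤ 3*Real.sqrt m :=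
      my_core_upper m ck D x hmpos hm4 hck1 hckm hDnn hD2 hxpos hxe
    have hu2 : |y - 1| ≤ 3*Real.sqrt m :=
      my_core_upper m cj Dt y hmpos hm4 hcj1 hcjm hDtnn hD2t hypos hye
    have : |y - x| ≤ |y - 1| + |x - 1| := by
      have := abs_sub (y - 1) (x - 1)
      calc |y - x| = |(y-1) - (x-1)| := by ring_nf
        _ ≤ |y-1| + |x-1| := abs_sub _ _
    rw [← hsqrt]
    linarith
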